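/- Let N ≥ 1 and let μ and ν be finite positive Borel measures on the Euclidean unit sphere S_{N−1} ⊆ ℝ^N such that μ linearly majorizes ν. Then ∫_{S_{N−1}} p dμ ≥ ∫_{S_{N−1}} p dν for every sublinear functional p : ℝ^N → ℝ, i.e., for every p that is positively homogeneous (p(tx) = t·p(x) for t ≥ 0) and subadditive (p(x + y) ≤ p(x) + p(y)). -/

import Mathlib

open MeasureTheory RealInnerProductSpace

/-- `μ` linearly majorizes `ν` (both finite positive Borel measures on the
Euclidean unit sphere `S_{N-1} ⊆ ℝ^N`): for every finite Borel partition
`U 0, …, U (m-1)` of the sphere there are positive measures `μs k` summing to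
`μ` such that `∫ ⟨l, u⟩ dμs k = ∫_{U k} ⟨l, u⟩ dν` for every `l ∈ ℝ^N`. -/
def LinMajorizes {N : ℕ}
    (μ ν : Measure (Metric.sphere (0 : EuclideanSpace ℝ (Fin N)) 1)) : Prop :=
  ∀ (m : ℕ) (U : Fin m → Set (Metric.sphere (0 : EuclideanSpace ℝ (Fin N)) 1)),
    (∀ k, MeasurableSet (U k)) →
    Pairwise (Function.onFun Disjoint U) →
    (⋃ k, U k) = Set.univ →
    ∃ μs : Fin m → Measure (Metric.sphere (0 : EuclideanSpace ℝ (Fin N)) 1),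
      (∀ k, IsFiniteMeasure (μs k)) ∧ (∑ k, μs k) = μ ∧
      ∀ (k : Fin m) (l : EuclideanSpace ℝ (Fin N)),
        ∫ u, ⟪l, (u : EuclideanSpace ℝ (Fin N))⟫ ∂(μs k) =
          ∫ u in U k, ⟪l, (u : EuclideanSpace ℝ (Fin N))⟫ ∂ν

/-- A sublinear functional admits a supporting linear functional at every
nonzero point, given by a vector via the inner product. -/
lemma exists_subgradient_sublinear {N : ℕ}
    (p : EuclideanSpace ℝ (Fin N) → ℝ)
    (hhom : ∀ t : ℝ, 0 ≤ t → ∀ x, p (t • x) = t * p x)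
    (hsub : ∀ x y, p (x + y) ≤ p x + p y)
    (u : EuclideanSpace ℝ (Fin N)) (hu : u ≠ 0) :
    ∃ l : EuclideanSpace ℝ (Fin N), (∀ x, ⟪l, x⟫ ≤ p x) ∧ ⟪l, u⟫ = p u := by
  have hp0 : p 0 = 0 := by simpa using hhom 0 le_rfl 0
  set f := LinearPMap.mkSpanSingleton (K := ℝ) (L := ℝ) (σ := RingHom.id ℝ) u (p u) hu with hf_def
  have hf : ∀ z : f.domain, f z ≤ p z := by
    rintro ⟨z, hz⟩
    obtain ⟨c, rfl⟩ := Submodule.mem_span_singleton.1 hz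
    have happ : f ⟨c • u, hz⟩ = c • p u := LinearPMap.mkSpanSingleton'_apply _ _ _ c hz
    rw [happ, smul_eq_mul]
    rcases le_or_gt 0 c with hc | hc
    · rw [hhom c hc]
    · have h1 : p (c • u) = (-c) * p (-u) := by
        have hcu : c • u = (-c) • (-u) := by simp
        rw [hcu, hhom (-c) (by linarith) (-u)]
      have h2 : 0 ≤ p u + p (-u) := by
        have h := hsub u (-u)
        simpa [hp0] using h
      rw [h1]; nlinarith
  obtain ⟨g, hg_eq, hg_le⟩ :=
    exists_extension_of_le_sublinear f p (fun c hc x => hhom c hc.le x) hsub hf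
  have hgu : g u = p u := by
    have h1 := hg_eq ⟨u, Submodule.mem_span_singleton_self u⟩
    have h2 : f ⟨u, Submodule.mem_span_singleton_self u⟩ = p u :=
      LinearPMap.mkSpanSingleton_apply ℝ ℝ hu (p u)
    rw [h2] at h1; exact h1
  refine ⟨(InnerProductSpace.toDual ℝ _).symm (LinearMap.toContinuousLinearMap g), ?_, ?_⟩
  · intro x
    rw [InnerProductSpace.toDual_symm_apply]
    simpa using hg_le x
  · rw [InnerProductSpace.toDual_symm_apply]
    simpa using hgu

/-- If `μ` linearly majorizes `ν` then `∫ p dμ ≥ ∫ p dν` for every sublinear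
functional `p : ℝ^N → ℝ`. -/
theorem integral_sublinear_le_of_linMajorizes {N : ℕ} (hN : 1 ≤ N)
    (μ ν : Measure (Metric.sphere (0 : EuclideanSpace ℝ (Fin N)) 1))
    [IsFiniteMeasure μ] [IsFiniteMeasure ν]
    (hmaj : LinMajorizes μ ν)
    (p : EuclideanSpace ℝ (Fin N) → ℝ)
    (hhom : ∀ t : ℝ, 0 ≤ t → ∀ x, p (t • x) = t * p x)
    (hsub : ∀ x y, p (x + y) ≤ p x + p y) :
    ∫ u, p (u : EuclideanSpace ℝ (Fin N)) ∂ν ≤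
      ∫ u, p (u : EuclideanSpace ℝ (Fin N)) ∂μ := by
  classical
  let E := EuclideanSpace ℝ (Fin N)
  let S := Metric.sphere (0 : EuclideanSpace ℝ (Fin N)) 1
  haveI : Nonempty (Fin N) := ⟨⟨0, hN⟩⟩
  have hp0 : p 0 = 0 := by simpa using hhom 0 le_rfl 0
  -- p is convex, hence continuous
  have hconv : ConvexOn ℝ Set.univ p := by
    refine ⟨convex_univ, fun x _ y _ a b ha hb hab => ?_⟩
    calc p (a • x + b • y) ≤ p (a • x) + p (b • y) := hsub _ _
      _ = a * p x + b * p y := by rw [hhom a ha, hhom b hb]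
      _ = a • p x + b • p y := by simp [smul_eq_mul]
  have hcont : Continuous p := by
    rw [← continuousOn_univ]
    exact hconv.continuousOn isOpen_univ
  -- bound p x ≤ M ‖x‖ with M ≥ 0
  have hSne : (Metric.sphere (0 : EuclideanSpace ℝ (Fin N)) 1).Nonempty :=
    NormedSpace.sphere_nonempty.2 zero_le_one
  obtain ⟨y₀, hy₀, hmax'⟩ :=
    (isCompact_sphere (0 : EuclideanSpace ℝ (Fin N)) 1).exists_isMaxOn hSne hcont.continuousOn
  have hmax : ∀ y ∈ Metric.sphere (0 : EuclideanSpace ℝ (Fin N)) 1, p y ≤ p y₀ :=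
    fun y hy => hmax' hy
  set M : ℝ := max (p y₀) 0 with hM_def
  have hMnn : 0 ≤ M := le_max_right _ _
  have hM : ∀ x : E, p x ≤ M * ‖x‖ := by
    intro x
    rcases eq_or_ne x 0 with rfl | hx
    · simp [hp0]
    · have hxn : (0:ℝ) < ‖x‖ := norm_pos_iff.2 hx
      have hux : (‖x‖⁻¹ • x) ∈ Metric.sphere (0 : EuclideanSpace ℝ (Fin N)) 1 := by
        rw [mem_sphere_zero_iff_norm, norm_smul]
        simp [abs_of_nonneg (inv_nonneg.2 hxn.le), inv_mul_cancel₀ hxn.ne']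
      have hxe : x = ‖x‖ • (‖x‖⁻¹ • x) := by
        rw [smul_smul, mul_inv_cancel₀ hxn.ne', one_smul]
      calc p x = ‖x‖ * p (‖x‖⁻¹ • x) := by rw [hxe, hhom _ (norm_nonneg x)]; rw [← hxe]
        _ ≤ ‖x‖ * M := by
            have h1 : p (‖x‖⁻¹ • x) ≤ p y₀ := hmax _ hux
            have h2 : p y₀ ≤ M := le_max_left _ _
            exact mul_le_mul_of_nonneg_left (h1.trans h2) hxn.le
        _ = M * ‖x‖ := mul_comm _ _
  have hLip : ∀ x y : E, p x - p y ≤ M * ‖x - y‖ := by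
    intro x y
    have h := hsub y (x - y)
    have hxy : y + (x - y) = x := by abel
    rw [hxy] at h
    linarith [hM (x - y)]
  -- ε-argument
  refine le_of_forall_pos_le_add fun ε hε => ?_
  set K : ℝ := 2 * M * (ν Set.univ).toReal with hK_def
  have hKnn : 0 ≤ K := by
    have := ENNReal.toReal_nonneg (a := ν Set.univ)
    nlinarith
  set δ : ℝ := ε / (K + 1) with hδ_def
  have hδ : 0 < δ := div_pos hε (by linarith)
  -- finite cover of the sphere by balls of radius δ
  obtain ⟨t, ht⟩ := isCompact_univ.elim_finite_subcover
    (fun c : S => Metric.ball c δ) (fun c => Metric.isOpen_ball)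
    (fun x _ => Set.mem_iUnion.2 ⟨x, Metric.mem_ball_self hδ⟩)
  set m := t.card with hm_def
  set e := t.equivFin with he_def
  set c : Fin m → S := fun k => (e.symm k : S) with hc_def
  set V : ℕ → Set S := fun n => if h : n < m then Metric.ball (c ⟨n, h⟩) δ else ∅
    with hV_def
  set U : Fin m → Set S := fun k => disjointed V k with hU_def
  have hmeasV : ∀ n, MeasurableSet (V n) := by
    intro n
    simp only [hV_def]
    split_ifs
    · exact Metric.isOpen_ball.measurableSet
    · exact MeasurableSet.empty
  have hU_meas : ∀ k, MeasurableSet (U k) := fun k => MeasurableSet.disjointed hmeasV k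
  have hU_disj : Pairwise (Function.onFun Disjoint U) := fun k j h =>
    disjoint_disjointed V (Fin.val_injective.ne h)
  have hU_sub : ∀ k, U k ⊆ Metric.ball (c k) δ := by
    intro k
    refine (disjointed_subset V (k : ℕ)).trans ?_
    simp only [hV_def]
    rw [dif_pos k.isLt]
  have hU_union : (⋃ k, U k) = Set.univ := by
    apply Set.eq_univ_of_forall
    intro x
    have hx := ht (Set.mem_univ x)
    obtain ⟨c₀, hc₀t, hxb⟩ := Set.mem_iUnion₂.1 hx
    set k : Fin m := e ⟨c₀, hc₀t⟩ with hk_def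
    have hck : c k = c₀ := by simp [hc_def, hk_def]
    have hxV : x ∈ V (k : ℕ) := by
      simp only [hV_def]
      rw [dif_pos k.isLt]
      have : (⟨(k : ℕ), k.isLt⟩ : Fin m) = k := Fin.eta _ _
      rw [this, hck]
      exact hxb
    have hxD : x ∈ ⋃ n, disjointed V n := by
      rw [iUnion_disjointed]
      exact Set.mem_iUnion.2 ⟨(k : ℕ), hxV⟩
    obtain ⟨n, hn⟩ := Set.mem_iUnion.1 hxD
    have hnm : n < m := by
      by_contra h
      have h1 : x ∈ V n := disjointed_subset V n hn
      simp only [hV_def] at h1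
      rw [dif_neg h] at h1
      exact h1
    exact Set.mem_iUnion.2 ⟨⟨n, hnm⟩, hn⟩
  -- apply majorization
  obtain ⟨μs, hfin, hsum, hintν⟩ := hmaj m U hU_meas hU_disj hU_union
  -- supporting functionals at the centers
  have hcnz : ∀ k : Fin m, ((c k : E)) ≠ 0 := by
    intro k
    have : ‖(c k : E)‖ = 1 := mem_sphere_zero_iff_norm.1 (c k).2
    intro h; rw [h] at this; simp at this
  choose l hl₁ hl₂ using fun k : Fin m =>
    exists_subgradient_sublinear p hhom hsub (c k : E) (hcnz k)
  have hlnorm : ∀ k, ‖l k‖ ≤ M := by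
    intro k
    rcases eq_or_ne (l k) 0 with h | h
    · rw [h]; simpa using hMnn
    · have h1 : ⟪l k, l k⟫ ≤ M * ‖l k‖ := (hl₁ k (l k)).trans (hM (l k))
      rw [real_inner_self_eq_norm_mul_norm] at h1
      have h2 : (0:ℝ) < ‖l k‖ := norm_pos_iff.2 h
      nlinarith
  -- key pointwise estimate
  have hkey : ∀ (k : Fin m), ∀ u ∈ U k, p ((u : S) : E) ≤ ⟪l k, ((u : S) : E)⟫ + 2 * M * δ := by
    intro k u hu
    have hd : ‖(u : E) - (c k : E)‖ ≤ δ := by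
      have h1 := hU_sub k hu
      rw [Metric.mem_ball, Subtype.dist_eq, dist_eq_norm] at h1
      exact h1.le
    have h1 : p (u : E) - p (c k : E) ≤ M * δ :=
      (hLip _ _).trans (mul_le_mul_of_nonneg_left hd hMnn)
    have h2 : p ((c k : E)) = ⟪l k, (c k : E)⟫ := (hl₂ k).symm
    have h3 : ⟪l k, (c k : E)⟫ - ⟪l k, (u : E)⟫ = ⟪l k, (c k : E) - (u : E)⟫ :=
      (inner_sub_right _ _ _).symm
    have h4 : ⟪l k, (c k : E) - (u : E)⟫ ≤ M * δ := by
      refine (real_inner_le_norm _ _).trans ?_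
      have h5 : ‖(c k : E) - (u : E)‖ ≤ δ := by rw [norm_sub_rev]; exact hd
      exact mul_le_mul (hlnorm k) h5 (norm_nonneg _) hMnn
    linarith
  -- integrability facts
  have hpS : Continuous (fun u : S => p (u : E)) := hcont.comp continuous_subtype_val
  have hinnS : ∀ k : Fin m, Continuous (fun u : S => ⟪l k, (u : E)⟫) := fun k =>
    Continuous.inner continuous_const continuous_subtype_val
  have hint_p : ∀ (κ : Measure S) [IsFiniteMeasure κ], Integrable (fun u : S => p (u : E)) κ :=
    fun κ _ => hpS.integrable_of_hasCompactSupport (HasCompactSupport.of_compactSpace _)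
  have hint_inn : ∀ (k : Fin m) (κ : Measure S) [IsFiniteMeasure κ],
      Integrable (fun u : S => ⟪l k, (u : E)⟫) κ := fun k κ _ =>
    (hinnS k).integrable_of_hasCompactSupport (HasCompactSupport.of_compactSpace _)
  -- the integral chain
  have hbUnion : (⋃ k ∈ (Finset.univ : Finset (Fin m)), U k) = Set.univ := by
    rw [← hU_union]; simp
  have hsplit : ∫ u, p (u : E) ∂ν = ∑ k, ∫ u in U k, p (u : E) ∂ν := by
    have h := integral_biUnion_finset (f := fun u : S => p (u : E)) (μ := ν)
      (Finset.univ : Finset (Fin m)) (fun k _ => hU_meas k)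
      (hU_disj.set_pairwise _) (fun k _ => (hint_p ν).integrableOn)
    rw [hbUnion] at h
    rw [← setIntegral_univ]
    exact h
  have hstep : ∀ k : Fin m,
      ∫ u in U k, p (u : E) ∂ν ≤ ∫ u, p (u : E) ∂(μs k) + 2 * M * δ * (ν (U k)).toReal := by
    intro k
    haveI := hfin k
    calc ∫ u in U k, p (u : E) ∂ν
        ≤ ∫ u in U k, (⟪l k, (u : E)⟫ + 2 * M * δ) ∂ν := by
          refine setIntegral_mono_on (hint_p ν).integrableOn
            (((hint_inn k ν).add (integrable_const _)).integrableOn) (hU_meas k) ?_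
          intro u hu
          exact hkey k u hu
      _ = ∫ u in U k, ⟪l k, (u : E)⟫ ∂ν + 2 * M * δ * (ν (U k)).toReal := by
          rw [integral_add (hint_inn k ν).integrableOn (integrable_const _).integrableOn,
            setIntegral_const, smul_eq_mul, mul_comm, measureReal_def]
      _ = ∫ u, ⟪l k, (u : E)⟫ ∂(μs k) + 2 * M * δ * (ν (U k)).toReal := by
          rw [hintν k (l k)]
      _ ≤ ∫ u, p (u : E) ∂(μs k) + 2 * M * δ * (ν (U k)).toReal := by
          have h := integral_mono (hint_inn k (μs k)) (hint_p (μs k))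
            (fun u => hl₁ k (u : E))
          linarith
  have hsum_meas : ∑ k, (ν (U k)).toReal = (ν Set.univ).toReal := by
    have h : ν Set.univ = ∑ k, ν (U k) := by
      rw [← hU_union, measure_iUnion hU_disj hU_meas, tsum_fintype]
    rw [h, ENNReal.toReal_sum fun k _ => measure_ne_top ν (U k)]
  have hsum_int : ∑ k, ∫ u, p (u : E) ∂(μs k) = ∫ u, p (u : E) ∂μ := by
    have h := integral_finset_sum_measure (f := fun u : S => p (u : E))
      (μ := μs) (s := Finset.univ) (fun k _ => by haveI := hfin k; exact hint_p (μs k))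
    rw [← h, hsum]
  have hmain : ∫ u, p (u : E) ∂ν ≤ ∫ u, p (u : E) ∂μ + K * δ := by
    calc ∫ u, p (u : E) ∂ν = ∑ k, ∫ u in U k, p (u : E) ∂ν := hsplit
      _ ≤ ∑ k, (∫ u, p (u : E) ∂(μs k) + 2 * M * δ * (ν (U k)).toReal) :=
          Finset.sum_le_sum fun k _ => hstep k
      _ = (∑ k, ∫ u, p (u : E) ∂(μs k)) + 2 * M * δ * ∑ k, (ν (U k)).toReal := by
          rw [Finset.sum_add_distrib, Finset.mul_sum]
      _ = ∫ u, p (u : E) ∂μ + K * δ := by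
          rw [hsum_int, hsum_meas, hK_def]; ring
  have hKδ : K * δ ≤ ε := by
    have h1 : K * δ ≤ (K + 1) * δ := by nlinarith [hδ.le]
    have h2 : (K + 1) * δ = ε := by
      rw [hδ_def]; field_simp
    linarith
  linarith
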